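/- For $m \geq 2$ even, the Gromov–Hausdorff distance between the vertex set $P_2$ of a regular 2-gon (two antipodal points) and the vertex set $P_m$ of a regular $m$-gon, both inscribed in the unit circle with the geodesic metric, equals $\frac{\pi}{2} - \frac{\pi}{m}$. -/

import Mathlib

open Real Set Metric

lemma coe_sub_int (x : ℝ) (k : ℤ) :
    ((x - k * (2 * π) : ℝ) : AddCircle (2 * π)) = ((x : ℝ) : AddCircle (2 * π)) := by
  rw [QuotientAddGroup.eq_iff_sub_mem]
  exact ⟨-k, by simp only [zsmul_eq_mul]; push_cast; ring⟩

lemma dist_coe_le (x y : ℝ) (k : ℤ) :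
    dist ((x : ℝ) : AddCircle (2 * π)) ((y : ℝ) : AddCircle (2 * π)) ≤ |x - y - k * (2 * π)| := by
  rw [dist_eq_norm, ← QuotientAddGroup.mk_sub, ← coe_sub_int (x - y) k]
  exact QuotientAddGroup.norm_mk_le_norm.trans_eq (Real.norm_eq_abs _)

lemma dist_zero_pi : dist ((0 : ℝ) : AddCircle (2 * π)) ((π : ℝ) : AddCircle (2 * π)) = π := by
  rw [dist_eq_norm, ← QuotientAddGroup.mk_sub]
  have h : ((0 - π : ℝ) : AddCircle (2 * π)) = -(((2 * π / 2 : ℝ)) : AddCircle (2 * π)) := by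
    rw [show (0 - π : ℝ) = -(2 * π / 2) by ring, QuotientAddGroup.mk_neg]
  rw [h, norm_neg, AddCircle.norm_half_period_eq, abs_of_pos (by positivity : (0:ℝ) < 2 * π)]
  ring

lemma int_approx (q s : ℤ) (hs : 0 < s) (hpar : (q - s) % 2 = 1) :
    ∃ k : ℤ, |q - k * (2 * s)| ≤ s - 1 := by
  have h2s : (0:ℤ) < 2 * s := by omega
  have h1 : 0 ≤ q % (2 * s) := Int.emod_nonneg _ (by omega)
  have h2 : q % (2 * s) < 2 * s := Int.emod_lt_of_pos _ h2s
  have h3 : q % (2 * s) % 2 = q % 2 := Int.emod_emod_of_dvd q ⟨s, rfl⟩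
  have hne : q % (2 * s) ≠ s := by omega
  rcases le_or_gt (q % (2 * s)) (s - 1) with h | h
  · refine ⟨q / (2 * s), ?_⟩
    rw [mul_comm (q / (2 * s)) (2 * s), ← Int.emod_def, abs_of_nonneg h1]
    exact h
  · refine ⟨q / (2 * s) + 1, ?_⟩
    rw [add_mul, one_mul, ← sub_sub, mul_comm (q / (2 * s)) (2 * s), ← Int.emod_def,
      abs_of_nonpos (by omega)]
    omega

/-- Vertex set of the regular `n`-gon inscribed in the unit circle, modeled inside
`AddCircle (2π)` whose quotient metric is exactly the geodesic metric
`d(α,β) = min (|α-β|) (2π - |α-β|)`. -/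
noncomputable def Pvert (n : ℕ) : Set (AddCircle (2 * π)) :=
  Set.range fun j : Fin n => ((2 * π * j / n : ℝ) : AddCircle (2 * π))

instance (n : ℕ) : Finite (Pvert n) := by unfold Pvert; exact (Set.finite_range _).to_subtype


instance (n : ℕ) [NeZero n] : Nonempty (Pvert n) := by
  unfold Pvert; exact ⟨⟨_, Set.mem_range_self (0 : Fin n)⟩⟩

theorem stmt6 (m : ℕ) (hm : 2 ≤ m) (heven : Even m) :
    haveI : NeZero m := ⟨by omega⟩
    GromovHausdorff.ghDist (Pvert 2) (Pvert m) = π / 2 - π / m := by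
  haveI : NeZero m := ⟨by omega⟩
  have hπ := Real.pi_pos
  obtain ⟨s, hs⟩ := heven
  have hs' : m = 2 * s := by omega
  have hs1 : 1 ≤ s := by omega
  have hmR : (0:ℝ) < m := by exact_mod_cast (by omega : 0 < m)
  have h2m : (2:ℝ) ≤ m := by exact_mod_cast hm
  set r0 : ℝ := π / 2 - π / m with hr0def
  have hr0 : 0 ≤ r0 := by
    have : π / m ≤ π / 2 := div_le_div_of_nonneg_left hπ.le two_pos h2m
    simp only [hr0def]; linarith
  -- the two points of `Pvert 2`
  have memA : ((0 : ℝ) : AddCircle (2 * π)) ∈ Pvert 2 :=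
    ⟨0, congrArg (fun x : ℝ => ((x : ℝ) : AddCircle (2 * π))) (by norm_num)⟩
  have memB : ((π : ℝ) : AddCircle (2 * π)) ∈ Pvert 2 :=
    ⟨1, congrArg (fun x : ℝ => ((x : ℝ) : AddCircle (2 * π))) (by norm_num)⟩
  set A : ↥(Pvert 2) := ⟨_, memA⟩ with hA
  set B : ↥(Pvert 2) := ⟨_, memB⟩ with hB
  have hAB : dist A B = π := by
    rw [Subtype.dist_eq]; exact dist_zero_pi
  have h2elem : ∀ x : ↥(Pvert 2), x = A ∨ x = B := by
    rintro ⟨x, j, rfl⟩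
    fin_cases j
    · exact Or.inl (Subtype.ext (congrArg (fun x : ℝ => ((x : ℝ) : AddCircle (2 * π)))
        (by norm_num)))
    · exact Or.inr (Subtype.ext (congrArg (fun x : ℝ => ((x : ℝ) : AddCircle (2 * π)))
        (by norm_num)))
  -- vertices of `Pvert m`, indexed by `ℕ`
  have memV : ∀ j : ℕ, ((2 * π * ((j % m : ℕ) : ℝ) / m : ℝ) : AddCircle (2 * π)) ∈ Pvert m := fun j =>
    ⟨⟨j % m, Nat.mod_lt _ (by omega)⟩, rfl⟩
  set V : ℕ → ↥(Pvert m) := fun j => ⟨_, memV j⟩ with hV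
  have hVsurj : ∀ y : ↥(Pvert m), ∃ j : ℕ, y = V j := by
    rintro ⟨y, j, rfl⟩
    exact ⟨j, Subtype.ext (congrArg (fun x : ℝ => ((x : ℝ) : AddCircle (2 * π)))
      (by rw [Nat.mod_eq_of_lt j.isLt]))⟩
  -- adjacent vertices are at distance ≤ 2π/m
  have hadj : ∀ j : ℕ, dist (V j) (V (j + 1)) ≤ 2 * π / m := by
    intro j
    rw [Subtype.dist_eq]
    show dist ((2 * π * ((j % m : ℕ) : ℝ) / m : ℝ) : AddCircle (2 * π)) _ ≤ _
    have e1 : (j + 1) % m = (j % m + 1) % m := by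
      rw [Nat.add_mod, Nat.mod_eq_of_lt (show 1 < m by omega)]
    have hjm : j % m < m := Nat.mod_lt _ (by omega)
    by_cases h : j % m + 1 = m
    · have e : (j + 1) % m = 0 := by rw [e1, h, Nat.mod_self]
      refine (dist_coe_le _ _ 1).trans ?_
      rw [e]
      have : 2 * π * ((j % m : ℕ) : ℝ) / m - 2 * π * ((0 : ℕ) : ℝ) / m - (1 : ℤ) * (2 * π)
          = -(2 * π / m) := by
        have : ((j % m : ℕ) : ℝ) = (m : ℝ) - 1 := by
          have : j % m = m - 1 := by omega
          rw [this]; push_cast [Nat.cast_sub (by omega : 1 ≤ m)]; ring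
        rw [this]; push_cast; field_simp; ring
      rw [this, abs_neg, abs_of_pos (by positivity)]
    · have e : (j + 1) % m = j % m + 1 := by
        rw [e1, Nat.mod_eq_of_lt (by omega : j % m + 1 < m)]
      refine (dist_coe_le _ _ 0).trans ?_
      rw [e]
      have : 2 * π * ((j % m : ℕ) : ℝ) / m - 2 * π * ((j % m + 1 : ℕ) : ℝ) / m - (0 : ℤ) * (2 * π)
          = -(2 * π / m) := by push_cast; field_simp; ring
      rw [this, abs_neg, abs_of_pos (by positivity)]
  -- the offset for the isometric embedding of `Pvert 2`
  set t : ℕ := if m % 4 = 0 then 1 else 0 with ht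
  set c : ℝ := t * π / m with hc
  have hc0 : 0 ≤ c := by positivity
  have hcr0 : c ≤ r0 := by
    simp only [hc, hr0def, ht]
    split
    · next h4 =>
      have h4R : (4:ℝ) ≤ m := by exact_mod_cast (by omega : 4 ≤ m)
      have h1 : π / m ≤ π / 4 := div_le_div_of_nonneg_left hπ.le (by norm_num) h4R
      have h2 : ((1:ℕ):ℝ) * π / m = π / m := by norm_num
      rw [h2]; linarith
    · have h1 : π / m ≤ π / 2 := div_le_div_of_nonneg_left hπ.le two_pos h2m
      have h2 : ((0:ℕ):ℝ) * π / m = 0 := by norm_num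
      rw [h2]; linarith
  -- upper bound
  have hmsR : (m:ℝ) = 2 * (s:ℝ) := by exact_mod_cast hs'
  have hsR : (0:ℝ) < s := by exact_mod_cast hs1
  have hΦiso : Isometry (fun x : ↥(Pvert 2) =>
      (x : AddCircle (2 * π)) + ((c : ℝ) : AddCircle (2 * π))) :=
    Isometry.of_dist_eq fun x y => by rw [dist_add_right, Subtype.dist_eq]
  have hΨiso : Isometry (Subtype.val : ↥(Pvert m) → AddCircle (2 * π)) := isometry_subtype_coe
  have hadd : ∀ x y : ℝ, ((x : ℝ) : AddCircle (2 * π)) + ((y : ℝ) : AddCircle (2 * π))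
      = ((x + y : ℝ) : AddCircle (2 * π)) := fun x y => rfl
  have htpar : (t + s) % 2 = 1 := by
    rw [ht]; split
    · next h4 => omega
    · next h4 => omega
  have upper : GromovHausdorff.ghDist ↥(Pvert 2) ↥(Pvert m) ≤ r0 := by
    refine (GromovHausdorff.ghDist_le_hausdorffDist hΦiso hΨiso).trans ?_
    rw [Subtype.range_coe]
    apply hausdorffDist_le_of_mem_dist hr0
    · rintro x ⟨z, rfl⟩
      rcases h2elem z with rfl | rfl
      · refine ⟨_, memV 0, ?_⟩
        show dist (((0:ℝ) : AddCircle (2 * π)) + ((c : ℝ) : AddCircle (2 * π))) _ ≤ r0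
        rw [hadd]
        refine le_trans (dist_coe_le _ _ 0) ?_
        have : (0:ℝ) + c - 2 * π * ((0 % m : ℕ) : ℝ) / m - (0:ℤ) * (2 * π) = c := by
          simp
        rw [this, abs_of_nonneg hc0]
        exact hcr0
      · refine ⟨_, memV s, ?_⟩
        show dist (((π:ℝ) : AddCircle (2 * π)) + ((c : ℝ) : AddCircle (2 * π))) _ ≤ r0
        rw [hadd]
        refine le_trans (dist_coe_le _ _ 0) ?_
        have hsm : s % m = s := Nat.mod_eq_of_lt (by omega)
        have : (π:ℝ) + c - 2 * π * ((s % m : ℕ) : ℝ) / m - (0:ℤ) * (2 * π) = c := by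
          rw [hsm]
          have : 2 * π * (s:ℝ) / m = π := by rw [hmsR]; field_simp
          rw [this]; ring
        rw [this, abs_of_nonneg hc0]
        exact hcr0
    · rintro y ⟨j, rfl⟩
      obtain ⟨k, hk⟩ := int_approx (2 * (j:ℤ) - t) s (by exact_mod_cast hs1)
        (by omega)
      have hkR : |(2 * ((j:ℕ):ℝ) - (t:ℝ)) - (k:ℝ) * (2 * (s:ℝ))| ≤ (s:ℝ) - 1 := by
        exact_mod_cast hk
      have hmem : (((k % 2 : ℤ) * π + c : ℝ) : AddCircle (2 * π)) ∈
          Set.range (fun x : ↥(Pvert 2) =>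
            (x : AddCircle (2 * π)) + ((c : ℝ) : AddCircle (2 * π))) := by
        rcases Int.emod_two_eq k with h | h
        · refine ⟨A, ?_⟩
          show ((0:ℝ) : AddCircle (2 * π)) + ((c : ℝ) : AddCircle (2 * π)) = _
          rw [hadd, h]
          norm_num
        · refine ⟨B, ?_⟩
          show ((π:ℝ) : AddCircle (2 * π)) + ((c : ℝ) : AddCircle (2 * π)) = _
          rw [hadd, h]
          norm_num
      refine ⟨_, hmem, ?_⟩
      refine le_trans (dist_coe_le _ _ (k / 2)) ?_
      have hk2 : ((k:ℝ)) = 2 * ((k / 2 : ℤ):ℝ) + ((k % 2 : ℤ):ℝ) := by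
        exact_mod_cast (Int.mul_ediv_add_emod k 2).symm
      have key : 2 * π * ((j:ℕ):ℝ) / m - (((k % 2 : ℤ):ℝ) * π + c) - ((k / 2 : ℤ):ℝ) * (2 * π)
          = π / m * ((2 * ((j:ℕ):ℝ) - (t:ℝ)) - (k:ℝ) * (2 * (s:ℝ))) := by
        rw [hc, hmsR]
        push_cast
        rw [hk2]
        field_simp
        ring
      rw [key, abs_mul, abs_of_pos (div_pos hπ hmR)]
      have : π / m * |(2 * ((j:ℕ):ℝ) - (t:ℝ)) - (k:ℝ) * (2 * (s:ℝ))| ≤ π / m * ((s:ℝ) - 1) :=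
        mul_le_mul_of_nonneg_left hkR (div_pos hπ hmR).le
      refine this.trans (le_of_eq ?_)
      rw [hr0def, hmsR]
      field_simp
  -- lower bound
  have lower : r0 ≤ GromovHausdorff.ghDist ↥(Pvert 2) ↥(Pvert m) := by
    by_contra hcon
    push_neg at hcon
    set r := GromovHausdorff.ghDist ↥(Pvert 2) ↥(Pvert m) with hrdef
    set Fl := GromovHausdorff.optimalGHInjl ↥(Pvert 2) ↥(Pvert m) with hFl
    set Fr := GromovHausdorff.optimalGHInjr ↥(Pvert 2) ↥(Pvert m) with hFr
    have hisol : Isometry Fl := GromovHausdorff.isometry_optimalGHInjl _ _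
    have hisor : Isometry Fr := GromovHausdorff.isometry_optimalGHInjr _ _
    have hH : hausdorffDist (Set.range Fl) (Set.range Fr) = r :=
      GromovHausdorff.hausdorffDist_optimal
    have hcl : IsCompact (Set.range Fl) := isCompact_range hisol.continuous
    have hcr : IsCompact (Set.range Fr) := isCompact_range hisor.continuous
    have hnetop : EMetric.hausdorffEdist (Set.range Fl) (Set.range Fr) ≠ ⊤ :=
      hausdorffEdist_ne_top_of_nonempty_of_bounded (Set.range_nonempty _)
        (Set.range_nonempty _) hcl.isBounded hcr.isBounded
    have cover : ∀ j : ℕ, dist (Fl A) (Fr (V j)) ≤ r ∨ dist (Fl B) (Fr (V j)) ≤ r := by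
      intro j
      have h1 : infDist (Fr (V j)) (Set.range Fl) ≤ r := by
        rw [← hH, hausdorffDist_comm]
        exact infDist_le_hausdorffDist_of_mem (Set.mem_range_self _)
          (by rwa [EMetric.hausdorffEdist_comm])
      obtain ⟨w, ⟨x, rfl⟩, hw⟩ := hcl.exists_infDist_eq_dist (Set.range_nonempty _) (Fr (V j))
      rcases h2elem x with rfl | rfl
      · exact Or.inl (by rw [dist_comm, ← hw]; exact h1)
      · exact Or.inr (by rw [dist_comm, ← hw]; exact h1)
    have hdAB : dist (Fl A) (Fl B) = π := by rw [hisol.dist_eq, hAB]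
    have hadjZ : ∀ j : ℕ, dist (Fr (V j)) (Fr (V (j + 1))) ≤ 2 * π / m := fun j => by
      rw [hisor.dist_eq]; exact hadj j
    have hrlt : r < π / 2 - π / m := hcon
    have hpimpos : 0 < π / (m:ℝ) := by positivity
    have hadjZ' : ∀ j : ℕ, dist (Fr (V j)) (Fr (V (j + 1))) ≤ 2 * (π / (m:ℝ)) := fun j => by
      rw [← mul_div_assoc]; exact hadjZ j
    have notBoth : ∀ z, ¬ (dist (Fl A) z ≤ r ∧ dist (Fl B) z ≤ r) := by
      rintro z ⟨h1, h2⟩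
      have h3 : dist (Fl A) (Fl B) ≤ dist (Fl A) z + dist z (Fl B) := dist_triangle _ _ _
      rw [hdAB, dist_comm z (Fl B)] at h3
      linarith
    have stepA : ∀ j, dist (Fl A) (Fr (V j)) ≤ r → dist (Fl A) (Fr (V (j + 1))) ≤ r := by
      intro j hj
      rcases cover (j + 1) with h | h
      · exact h
      · exfalso
        have t1 : dist (Fl A) (Fl B) ≤ dist (Fl A) (Fr (V j)) + dist (Fr (V j)) (Fr (V (j + 1)))
            + dist (Fr (V (j + 1))) (Fl B) := dist_triangle4 _ _ _ _
        rw [hdAB, dist_comm (Fr (V (j + 1))) (Fl B)] at t1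
        linarith [hadjZ' j]
    have stepB : ∀ j, dist (Fl B) (Fr (V j)) ≤ r → dist (Fl B) (Fr (V (j + 1))) ≤ r := by
      intro j hj
      rcases cover (j + 1) with h | h
      · exfalso
        have t1 : dist (Fl A) (Fl B) ≤ dist (Fl A) (Fr (V (j + 1)))
            + dist (Fr (V (j + 1))) (Fr (V j)) + dist (Fr (V j)) (Fl B) := dist_triangle4 _ _ _ _
        rw [hdAB, dist_comm (Fr (V j)) (Fl B), dist_comm (Fr (V (j + 1))) (Fr (V j))] at t1
        linarith [hadjZ' j]
      · exact h
    have hinfA : ∃ j : ℕ, dist (Fl A) (Fr (V j)) ≤ r := by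
      have h1 : infDist (Fl A) (Set.range Fr) ≤ r := by
        rw [← hH]
        exact infDist_le_hausdorffDist_of_mem (Set.mem_range_self _) hnetop
      obtain ⟨w, ⟨y, rfl⟩, hw⟩ := hcr.exists_infDist_eq_dist (Set.range_nonempty _) (Fl A)
      obtain ⟨j, rfl⟩ := hVsurj y
      exact ⟨j, by rw [← hw]; exact h1⟩
    have hinfB : ∃ j : ℕ, dist (Fl B) (Fr (V j)) ≤ r := by
      have h1 : infDist (Fl B) (Set.range Fr) ≤ r := by
        rw [← hH]
        exact infDist_le_hausdorffDist_of_mem (Set.mem_range_self _) hnetop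
      obtain ⟨w, ⟨y, rfl⟩, hw⟩ := hcr.exists_infDist_eq_dist (Set.range_nonempty _) (Fl B)
      obtain ⟨j, rfl⟩ := hVsurj y
      exact ⟨j, by rw [← hw]; exact h1⟩
    obtain ⟨j1, hj1⟩ := hinfA
    obtain ⟨j2, hj2⟩ := hinfB
    by_cases h0 : dist (Fl A) (Fr (V 0)) ≤ r
    · have allA : ∀ j, dist (Fl A) (Fr (V j)) ≤ r := by
        intro j
        induction j with
        | zero => exact h0
        | succ n ih => exact stepA n ih
      exact notBoth (Fr (V j2)) ⟨allA j2, hj2⟩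
    · have q0 : dist (Fl B) (Fr (V 0)) ≤ r := (cover 0).resolve_left h0
      have allB : ∀ j, dist (Fl B) (Fr (V j)) ≤ r := by
        intro j
        induction j with
        | zero => exact q0
        | succ n ih => exact stepB n ih
      exact notBoth (Fr (V j1)) ⟨hj1, allB j1⟩
  exact le_antisymm upper lower
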